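/- (Object duality, part (ii).) Let (V, D) be an EReal-extended L-convex set and define d_D v w := ⨆_{p ∈ D} (p w - p v) for v, w ∈ V. Then D is exactly the set of maps that are nonexpansive with respect to d_D: for every q : V → EReal, q ∈ D if and only if q w - q v ≤ d_D v w for all v, w ∈ V. -/

import Mathlib

/-- Dual addition on `EReal`: `x ⊕ y = -((-x) + (-y))`. -/
noncomputable def oplus (x y : EReal) : EReal := -((-x) + (-y))

/-- The distance induced on the index set by an `EReal`-extended L-convex set. -/
noncomputable def distD {V : Type*} (D : Set (V → EReal)) (v w : V) : EReal :=
  ⨆ p ∈ D, (p w - p v)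

lemma oplus_coe (x : EReal) (r : ℝ) : oplus x (r : EReal) = x + r := by
  induction x using EReal.rec with
  | bot => simp [oplus]
  | coe a => simp [oplus, ← EReal.coe_neg, ← EReal.coe_add]; ring
  | top => simp [oplus]

lemma ereal_sub_self_nonpos (x : EReal) : x - x ≤ 0 := by
  induction x using EReal.rec with
  | bot => simp
  | coe a => simp [← EReal.coe_sub]
  | top => simp

lemma ereal_cases (x : EReal) : x = ⊥ ∨ (∃ a : ℝ, x = a) ∨ x = ⊤ := by
  induction x using EReal.rec with
  | bot => exact Or.inl rfl
  | coe a => exact Or.inr (Or.inl ⟨a, rfl⟩)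
  | top => exact Or.inr (Or.inr rfl)

lemma ereal_eq_bot_of_le_neg_nat (x : EReal) (h : ∀ n : ℕ, x ≤ ((-(n : ℝ) : ℝ) : EReal)) :
    x = ⊥ := by
  rcases ereal_cases x with hx | ⟨a, hx⟩ | hx
  · exact hx
  · exfalso
    obtain ⟨n, hn⟩ := exists_nat_gt (-a)
    have := h n
    rw [hx, EReal.coe_le_coe_iff] at this
    linarith
  · exfalso
    have := h 0
    rw [hx] at this
    simp at this

lemma isup_add_nat (y : EReal) : ⨆ n : ℕ, (y + ((n:ℝ):EReal)) = y + ⊤ := by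
  induction y using EReal.rec with
  | bot => simp
  | coe a =>
    rw [EReal.coe_add_top, iSup_eq_top]
    intro b hb
    induction b using EReal.rec with
    | bot => exact ⟨0, by simp⟩
    | coe s =>
      obtain ⟨n, hn⟩ := exists_nat_gt (s - a)
      refine ⟨n, ?_⟩
      rw [← EReal.coe_add, EReal.coe_lt_coe_iff]
      linarith
    | top => exact absurd hb (lt_irrefl _)
  | top => simp only [EReal.top_add_coe, iSup_const, EReal.top_add_top]

section
variable {V : Type*} (D : Set (V → EReal))
  (hOrd : ∀ S ⊆ D, (fun v => ⨆ p ∈ S, p v) ∈ D ∧ (fun v => ⨅ p ∈ S, p v) ∈ D)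
  (hWt : ∀ p ∈ D, ∀ α : EReal, (fun v => oplus (p v) α) ∈ D)

include hOrd in
lemma bot_mem_D : (fun _ : V => (⊥ : EReal)) ∈ D := by
  have h := (hOrd ∅ (Set.empty_subset _)).1
  simpa using h

include hOrd in
lemma top_mem_D : (fun _ : V => (⊤ : EReal)) ∈ D := by
  have h := (hOrd ∅ (Set.empty_subset _)).2
  simpa using h

include hOrd hWt in
lemma add_top_mem_D {p : V → EReal} (hp : p ∈ D) : (fun x => p x + ⊤) ∈ D := by
  set S : Set (V → EReal) := {h | ∃ n : ℕ, h = fun x => oplus (p x) ((n:ℝ):EReal)} with hS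
  have hSD : S ⊆ D := by
    rintro h ⟨n, rfl⟩
    exact hWt p hp _
  have hmem := (hOrd S hSD).1
  have heq : (fun x => ⨆ h ∈ S, h x) = fun x => p x + ⊤ := by
    funext x
    rw [← isup_add_nat (p x)]
    apply le_antisymm
    · apply iSup₂_le
      rintro h ⟨n, rfl⟩
      simp only [oplus_coe]
      exact le_iSup (fun n : ℕ => p x + ((n:ℝ):EReal)) n
    · apply iSup_le
      intro n
      have h1 : (fun x => oplus (p x) ((n:ℝ):EReal)) ∈ S := ⟨n, rfl⟩
      have h2 := le_biSup (f := fun h : V → EReal => h x) h1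
      simp only [oplus_coe] at h2; exact h2
  rwa [heq] at hmem

include hOrd hWt in
lemma shift_mem_D {p : V → EReal} (hp : p ∈ D) (v : V) (c : ℝ) :
    ∃ g ∈ D, ∀ x, g x = (p x - p v) + (c : EReal) := by
  rcases ereal_cases (p v) with hv | ⟨a, hv⟩ | hv
  · refine ⟨fun x => p x + ⊤, add_top_mem_D D hOrd hWt hp, ?_⟩
    intro x
    rw [hv]
    show p x + ⊤ = (p x - ⊥) + (c : EReal)
    generalize p x = y
    induction y using EReal.rec with
    | bot => simp
    | coe b => simp
    | top => simp
  · refine ⟨fun x => oplus (p x) ((c - a : ℝ) : EReal), hWt p hp _, ?_⟩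
    intro x
    rw [hv]
    show oplus (p x) ((c - a : ℝ) : EReal) = (p x - (a : EReal)) + (c : EReal)
    rw [oplus_coe]
    generalize p x = y
    induction y using EReal.rec with
    | bot => simp
    | coe b =>
      simp only [← EReal.coe_sub, ← EReal.coe_add, EReal.coe_eq_coe_iff]
      ring
    | top => simp [EReal.top_sub_coe, ← EReal.coe_sub, EReal.top_add_coe]
  · refine ⟨fun _ => (⊥ : EReal), bot_mem_D D hOrd, ?_⟩
    intro x
    rw [hv]
    show (⊥ : EReal) = (p x - ⊤) + (c : EReal)
    rw [EReal.sub_top]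
    simp

include hOrd hWt in
lemma Alem (v : V) (c : ℝ) :
    ∃ f ∈ D, f v ≤ (c : EReal) ∧ ∀ x, (⨆ p ∈ D, (p x - p v)) + (c : EReal) ≤ f x := by
  set S : Set (V → EReal) :=
    {h | h ∈ D ∧ ∃ p ∈ D, ∀ x, h x = (p x - p v) + (c : EReal)} with hS
  have hSD : S ⊆ D := fun h hh => hh.1
  refine ⟨fun x => ⨆ h ∈ S, h x, (hOrd S hSD).1, ?_, ?_⟩
  · apply iSup₂_le
    rintro h ⟨hD, p, hp, hx⟩
    rw [hx v]
    calc (p v - p v) + (c : EReal) ≤ 0 + (c : EReal) :=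
          add_le_add_left (ereal_sub_self_nonpos _) _
      _ = (c : EReal) := zero_add _
  · intro x
    have h1 : ∀ p ∈ D, (p x - p v) + (c : EReal) ≤ ⨆ h ∈ S, h x := by
      intro p hp
      obtain ⟨g, hgD, hgx⟩ := shift_mem_D D hOrd hWt hp v c
      rw [← hgx x]
      exact le_biSup (f := fun h : V → EReal => h x) ⟨hgD, p, hp, hgx⟩
    have h2 : (⨆ p ∈ D, (p x - p v)) ≤ (⨆ h ∈ S, h x) - (c : EReal) := by
      apply iSup₂_le
      intro p hp
      have h3 : (p x - p v) + (c : EReal) - (c : EReal)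
          ≤ (⨆ h ∈ S, h x) - (c : EReal) := EReal.sub_le_sub (h1 p hp) le_rfl
      rwa [EReal.add_sub_cancel_right] at h3
    calc (⨆ p ∈ D, (p x - p v)) + (c : EReal)
        ≤ ((⨆ h ∈ S, h x) - (c : EReal)) + (c : EReal) := add_le_add_left h2 _
      _ = ⨆ h ∈ S, h x := EReal.sub_add_cancel

end

theorem object_duality_lconvex {V : Type*} (D : Set (V → EReal))
    (hOrd : ∀ S ⊆ D, (fun v => ⨆ p ∈ S, p v) ∈ D ∧ (fun v => ⨅ p ∈ S, p v) ∈ D)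
    (hWt : ∀ p ∈ D, ∀ α : EReal, (fun v => oplus (p v) α) ∈ D) :
    ∀ q : V → EReal, q ∈ D ↔ ∀ v w, q w - q v ≤ distD D v w := by
  intro q
  constructor
  · intro hq v w
    exact le_biSup (f := fun p : V → EReal => p w - p v) hq
  · intro hq
    have key : ∀ v : V, ∃ f ∈ D, f v ≤ q v ∧ ∀ x, q x ≤ f x := by
      intro v
      rcases ereal_cases (q v) with hv | ⟨c, hv⟩ | hv
      · -- q v = ⊥
        have hd : ∀ x, q x ≠ ⊥ → (⨆ p ∈ D, (p x - p v)) = ⊤ := by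
          intro x hx
          have h1 := hq v x
          rw [hv] at h1
          have h2 : q x - (⊥ : EReal) = ⊤ := EReal.sub_bot hx
          rw [h2] at h1
          exact top_le_iff.1 h1
        set S : Set (V → EReal) :=
          {h | h ∈ D ∧ (∃ n : ℕ, h v ≤ ((-(n : ℝ) : ℝ) : EReal)) ∧ ∀ x, q x ≤ h x} with hS
        have hSD : S ⊆ D := fun h hh => hh.1
        refine ⟨fun x => ⨅ h ∈ S, h x, (hOrd S hSD).2, ?_, ?_⟩
        · rw [hv]
          have hb : (⨅ h ∈ S, h v) = ⊥ := by
            apply ereal_eq_bot_of_le_neg_nat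
            intro n
            obtain ⟨f, hfD, hfv, hfx⟩ := Alem D hOrd hWt v (-(n : ℝ))
            have hfS : f ∈ S := by
              refine ⟨hfD, ⟨n, hfv⟩, ?_⟩
              intro x
              by_cases hx : q x = ⊥
              · rw [hx]; exact bot_le
              · have := hfx x
                rw [hd x hx] at this
                have htop : (⊤ : EReal) + ((-(n : ℝ) : ℝ) : EReal) = ⊤ :=
                  EReal.top_add_coe _
                rw [htop, top_le_iff] at this
                rw [this]
                exact le_top
            exact le_trans (biInf_le (f := fun h : V → EReal => h v) hfS) hfv
          exact le_of_eq hb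
        · intro x
          apply le_iInf₂
          intro h hh
          exact hh.2.2 x
      · -- q v = c real
        obtain ⟨f, hfD, hfv, hfx⟩ := Alem D hOrd hWt v c
        refine ⟨f, hfD, by rw [hv]; exact hfv, ?_⟩
        intro x
        have h1 : q x - q v ≤ ⨆ p ∈ D, (p x - p v) := hq v x
        rw [hv] at h1
        calc q x = (q x - (c : EReal)) + (c : EReal) := EReal.sub_add_cancel.symm
          _ ≤ (⨆ p ∈ D, (p x - p v)) + (c : EReal) := add_le_add_left h1 _
          _ ≤ f x := hfx x
      · -- q v = ⊤
        refine ⟨fun _ => (⊤ : EReal), top_mem_D D hOrd, ?_, fun x => le_top⟩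
        rw [hv]
    set S : Set (V → EReal) := {f | f ∈ D ∧ ∀ x, q x ≤ f x} with hS
    have hSD : S ⊆ D := fun f hf => hf.1
    have hmem := (hOrd S hSD).2
    have heq : q = fun x => ⨅ f ∈ S, f x := by
      funext x
      apply le_antisymm
      · exact le_iInf₂ fun f hf => hf.2 x
      · obtain ⟨f, hfD, hfx, hfall⟩ := key x
        exact le_trans (biInf_le (f := fun h : V → EReal => h x) ⟨hfD, hfall⟩) hfx
    rwa [heq]
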